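/- Let Φ be a simply-laced crystallographic root system with all roots of squared length 2, and let β_i, β_{i+1}, β_j be roots such that s_{β_j} commutes with neither s_{β_i} nor s_{β_{i+1}}, and s_{β_i} does not commute with s_{β_{i+1}}, and β_i, β_{i+1}, β_j are linearly independent. Then s_{β_j} commutes with s_{β_i} s_{β_{i+1}} s_{β_i}. -/

import Mathlib

open scoped RealInnerProductSpace

/-- The reflection `s_α` in the hyperplane orthogonal to `α`. -/
noncomputable def sRefl {V : Type*} [NormedAddCommGroup V] [InnerProductSpace ℝ V]
    (α : V) : V → V :=
  fun v => v - (2 * ⟪α, v⟫ / ⟪α, α⟫) • α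

private lemma sRefl_comm_of_inner_eq_zero {V : Type*} [NormedAddCommGroup V]
    [InnerProductSpace ℝ V] {α β : V} (h : ⟪α, β⟫ = 0) :
    ∀ v, sRefl α (sRefl β v) = sRefl β (sRefl α v) := by
  have h' : ⟪β, α⟫ = 0 := by rw [real_inner_comm]; exact h
  intro v
  simp only [sRefl, inner_sub_right, real_inner_smul_right, h, h', mul_zero, zero_div,
    mul_zero, sub_zero, zero_smul]
  abel

/-- Let `Φ` be a simply-laced crystallographic root system with all roots of squared length `2`,
and let `β_i, β_{i+1}, β_j ∈ Φ` be linearly independent roots such that `s_{β_j}` commutes with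
neither `s_{β_i}` nor `s_{β_{i+1}}`, and `s_{β_i}` does not commute with `s_{β_{i+1}}`. Then
`s_{β_j}` commutes with `s_{β_i} s_{β_{i+1}} s_{β_i}`. -/
theorem stmt_10 {V : Type*} [NormedAddCommGroup V] [InnerProductSpace ℝ V]
    (Φ : Set V)
    (hspan : Submodule.span ℝ Φ = ⊤)
    (hpm : ∀ α ∈ Φ, ∀ c : ℝ, c • α ∈ Φ → c = 1 ∨ c = -1)
    (hreflcl : ∀ α ∈ Φ, ∀ β ∈ Φ, sRefl α β ∈ Φ)
    (hcrys : ∀ α ∈ Φ, ∀ β ∈ Φ, ∃ z : ℤ, 2 * ⟪α, β⟫ / ⟪β, β⟫ = (z : ℝ))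
    (hlen : ∀ α ∈ Φ, ⟪α, α⟫ = 2)
    (βi βi1 βj : V) (hβi : βi ∈ Φ) (hβi1 : βi1 ∈ Φ) (hβj : βj ∈ Φ)
    (hji : ¬ ∀ v, sRefl βj (sRefl βi v) = sRefl βi (sRefl βj v))
    (hji1 : ¬ ∀ v, sRefl βj (sRefl βi1 v) = sRefl βi1 (sRefl βj v))
    (hii1 : ¬ ∀ v, sRefl βi (sRefl βi1 v) = sRefl βi1 (sRefl βi v))
    (hind : LinearIndependent ℝ ![βi, βi1, βj]) :
    ∀ v, sRefl βj ((sRefl βi ∘ sRefl βi1 ∘ sRefl βi) v) =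
      (sRefl βi ∘ sRefl βi1 ∘ sRefl βi) (sRefl βj v) := by
  -- no nontrivial linear relation
  have hrel : ∀ x y z : ℝ, x • βi + y • βi1 + z • βj = 0 → x = 0 ∧ y = 0 ∧ z = 0 := by
    intro x y z h
    have := Fintype.linearIndependent_iff.mp hind ![x, y, z] (by
      simpa [Fin.sum_univ_three] using h)
    exact ⟨this 0, this 1, this 2⟩
  -- inner products are integers
  have hint : ∀ α ∈ Φ, ∀ β ∈ Φ, ∃ z : ℤ, ⟪α, β⟫ = (z : ℝ) := by
    intro α hα β hβ
    obtain ⟨z, hz⟩ := hcrys α hα β hβ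
    rw [hlen β hβ] at hz
    exact ⟨z, by linarith [hz, (by ring : 2 * ⟪α, β⟫ / 2 = ⟪α, β⟫)]⟩
  -- any two of our three roots have inner product ±1 if the reflections don't commute
  have key : ∀ α ∈ Φ, ∀ β ∈ Φ,
      (¬ ∀ v, sRefl α (sRefl β v) = sRefl β (sRefl α v)) →
      (∀ x y : ℝ, x • α + y • β = 0 → x = 0 ∧ y = 0) →
      ⟪α, β⟫ = 1 ∨ ⟪α, β⟫ = -1 := by
    intro α hα β hβ hnc hpair
    obtain ⟨z, hz⟩ := hint α hα β hβ
    have hcs := real_inner_mul_inner_self_le α β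
    rw [hlen α hα, hlen β hβ, hz] at hcs
    have hz4 : z * z ≤ 4 := by
      have : ((z * z : ℤ) : ℝ) ≤ 4 := by push_cast; linarith
      exact_mod_cast this
    have hz0 : z ≠ 0 := by
      rintro rfl
      exact hnc (sRefl_comm_of_inner_eq_zero (by simpa using hz))
    have hz' : ⟪β, α⟫ = (z : ℝ) := by rw [real_inner_comm]; exact hz
    have hz2 : z ≠ 2 := by
      rintro rfl
      have : ⟪α - β, α - β⟫ = 0 := by
        simp only [inner_sub_left, inner_sub_right, hlen α hα, hlen β hβ, hz, hz']
        push_cast; ring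
      have hαβ : α - β = 0 := inner_self_eq_zero.mp this
      have := hpair 1 (-1) (by rw [one_smul, neg_one_smul, ← sub_eq_add_neg]; exact hαβ)
      exact one_ne_zero this.1
    have hzm2 : z ≠ -2 := by
      rintro rfl
      have : ⟪α + β, α + β⟫ = 0 := by
        simp only [inner_add_left, inner_add_right, hlen α hα, hlen β hβ, hz, hz']
        push_cast; ring
      have hαβ : α + β = 0 := inner_self_eq_zero.mp this
      have := hpair 1 1 (by rw [one_smul, one_smul]; exact hαβ)
      exact one_ne_zero this.1
    have hb1 : -2 ≤ z := by nlinarith [sq_nonneg (z + 2)]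
    have hb2 : z ≤ 2 := by nlinarith [sq_nonneg (z - 2)]
    have : z = 1 ∨ z = -1 := by omega
    rcases this with h | h <;> [left; right] <;> rw [hz, h] <;> norm_num
  have ha := key βi hβi βi1 hβi1 hii1 (fun x y h => by
    have := hrel x y 0 (by simpa using h); exact ⟨this.1, this.2.1⟩)
  have hb := key βj hβj βi hβi hji (fun x y h => by
    have := hrel y 0 x (by rw [add_comm] at h; simpa [add_comm] using h)
    exact ⟨this.2.2, this.1⟩)
  have hc := key βj hβj βi1 hβi1 hji1 (fun x y h => by
    have := hrel 0 y x (by simpa [add_comm] using h)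
    exact ⟨this.2.2, this.2.1⟩)
  set a : ℝ := ⟪βi, βi1⟫ with ha_def
  set b : ℝ := ⟪βj, βi⟫ with hb_def
  set c : ℝ := ⟪βj, βi1⟫ with hc_def
  have hii : ⟪βi, βi⟫ = 2 := hlen βi hβi
  have hi1i1 : ⟪βi1, βi1⟫ = 2 := hlen βi1 hβi1
  have hjj : ⟪βj, βj⟫ = 2 := hlen βj hβj
  have ha' : ⟪βi1, βi⟫ = a := by rw [real_inner_comm]
  have hb' : ⟪βi, βj⟫ = b := by rw [real_inner_comm]
  have hc' : ⟪βi1, βj⟫ = c := by rw [real_inner_comm]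
  -- rule out c = -a*b
  have habc : c = a * b := by
    by_contra hne
    have hcab : c = -(a * b) := by
      rcases ha with h1 | h1 <;> rcases hb with h2 | h2 <;> rcases hc with h3 | h3 <;>
        rw [h1, h2, h3] at hne ⊢ <;> revert hne <;> norm_num
    -- then βi - a•βi1 - b•βj is a nontrivial relation
    set w : V := βi - a • βi1 - b • βj with hw
    have ha2 : a * a = 1 := by rcases ha with h | h <;> rw [h] <;> norm_num
    have hb2 : b * b = 1 := by rcases hb with h | h <;> rw [h] <;> norm_num
    have hw0 : ⟪w, w⟫ = 0 := by
      simp only [hw, inner_sub_left, inner_sub_right, real_inner_smul_left,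
        real_inner_smul_right, hii, hi1i1, hjj, ← ha_def, ← hb_def, ← hc_def,
        ha', hb', hc']
      rw [hcab]; nlinarith [ha2, hb2]
    have hw' : w = 0 := inner_self_eq_zero.mp hw0
    have := hrel 1 (-a) (-b) (by
      rw [one_smul, neg_smul, neg_smul, ← sub_eq_add_neg, ← sub_eq_add_neg]
      exact hw')
    exact one_ne_zero this.1
  -- now finish via the conjugation formula and orthogonality
  have ha2 : a * a = 1 := by rcases ha with h | h <;> rw [h] <;> norm_num
  set γ : V := βi1 - a • βi with hγ
  have hγγ : ⟪γ, γ⟫ = 2 := by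
    simp only [hγ, inner_sub_left, inner_sub_right, real_inner_smul_left,
      real_inner_smul_right, hii, hi1i1, ← ha_def, ha']
    nlinarith [ha2]
  have hjγ : ⟪βj, γ⟫ = 0 := by
    simp only [hγ, inner_sub_right, real_inner_smul_right, ← hb_def, ← hc_def]
    rw [habc]; ring
  have hconj : ∀ v, (sRefl βi ∘ sRefl βi1 ∘ sRefl βi) v = sRefl γ v := by
    intro v
    simp only [Function.comp_apply, sRefl, hγ, inner_sub_left, inner_sub_right,
      real_inner_smul_left, real_inner_smul_right, hii, hi1i1, ← ha_def, ha']
    rcases ha with h | h <;> rw [h] <;> norm_num <;> match_scalars <;> ring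
  intro v
  rw [hconj, hconj, sRefl_comm_of_inner_eq_zero hjγ]
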